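/- Let $a_1, \dots, a_m$ be distinct points in the open upper half-plane and let $\alpha_1, \dots, \alpha_m \in \mathbb{C}$ satisfy the transposed Vandermonde system $\sum_{j=1}^m \alpha_j a_j^k = \delta_{k,0}$ for $0 \le k \le m-1$. Then the function $K(x) = \frac{1}{2\pi i}\sum_{j=1}^m \left( \frac{\alpha_j}{x - a_j} - \frac{\overline{\alpha_j}}{x - \overline{a_j}} \right)$ is real-valued on $\mathbb{R}$ and satisfies $\int_{\mathbb{R}} K(x)\, dx = 1$. -/

import Mathlib

open MeasureTheory Complex Filter Set
open scoped Real Topology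

namespace RatKernelAux

noncomputable def psi (a : ℂ) (x : ℝ) : ℂ := ((x:ℂ) - a)⁻¹ - ((x:ℂ) - I)⁻¹

lemma sub_ne (a : ℂ) (ha : a.im ≠ 0) (x : ℝ) : (x:ℂ) - a ≠ 0 := by
  intro h
  have h2 : ((x:ℂ) - a).im = 0 := by rw [h]; simp
  simp [Complex.sub_im] at h2
  exact ha h2

lemma sub_I_ne (x : ℝ) : (x:ℂ) - I ≠ 0 :=
  sub_ne I (by simp) x

lemma psi_eq (a : ℂ) (ha : 0 < a.im) (x : ℝ) :
    psi a x = (a - I) / (((x:ℂ) - a) * ((x:ℂ) - I)) := by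
  have h1 := sub_ne a (ne_of_gt ha) x
  have h2 := sub_I_ne x
  unfold psi
  field_simp [psi]
  ring

lemma key_ineq (p q x : ℝ) (hq : 0 < q) :
    (1 + x^2) ≤ (2 + (1 + 2*p^2)/q^2) * ((x-p)^2 + q^2) := by
  have h1 : x^2 ≤ 2*(x-p)^2 + 2*p^2 := by nlinarith [sq_nonneg (x - 2*p)]
  have h2 : (1 + 2*p^2)/q^2 * q^2 = 1 + 2*p^2 := by field_simp
  have h3 : 0 ≤ (1 + 2*p^2)/q^2 * (x-p)^2 := by positivity
  nlinarith

lemma psi_cont (a : ℂ) (ha : 0 < a.im) : Continuous (psi a) := by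
  apply Continuous.sub
  · exact ((Complex.continuous_ofReal.sub continuous_const).inv₀
      (fun x => sub_ne a (ne_of_gt ha) x))
  · exact ((Complex.continuous_ofReal.sub continuous_const).inv₀ (fun x => sub_I_ne x))

lemma psi_integrable (a : ℂ) (ha : 0 < a.im) : Integrable (psi a) := by
  set C : ℝ := 2 + (1 + 2*(a.re)^2)/(a.im)^2 with hCdef
  have hC : 0 < C := by positivity
  apply Integrable.mono' ((integrable_inv_one_add_sq).const_mul (‖a - I‖ * Real.sqrt C))
    (psi_cont a ha).aestronglyMeasurable
  filter_upwards with x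
  rw [psi_eq a ha x]
  have h1 := sub_ne a (ne_of_gt ha) x
  have h2 := sub_I_ne x
  have hD : 0 < ‖(x:ℂ) - a‖ * ‖(x:ℂ) - I‖ :=
    mul_pos (norm_pos_iff.mpr h1) (norm_pos_iff.mpr h2)
  have hDsq : (‖(x:ℂ) - a‖ * ‖(x:ℂ) - I‖)^2 = ((x - a.re)^2 + a.im^2) * (x^2 + 1) := by
    rw [mul_pow]
    simp only [Complex.sq_norm, Complex.normSq_apply, Complex.sub_re,
      Complex.sub_im, Complex.ofReal_re, Complex.ofReal_im, Complex.I_re, Complex.I_im]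
    ring
  have hcross : (1 + x^2) ≤ Real.sqrt C * (‖(x:ℂ) - a‖ * ‖(x:ℂ) - I‖) := by
    have hkey := key_ineq a.re a.im x (ha)
    have : (1 + x^2)^2 ≤ C * (‖(x:ℂ) - a‖ * ‖(x:ℂ) - I‖)^2 := by
      rw [hDsq, hCdef]
      have h1x : (0:ℝ) ≤ 1 + x^2 := by positivity
      nlinarith [mul_le_mul_of_nonneg_right hkey (by positivity : (0:ℝ) ≤ x^2 + 1)]
    calc (1 + x^2) = Real.sqrt ((1 + x^2)^2) := by
          rw [Real.sqrt_sq (by positivity)]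
      _ ≤ Real.sqrt (C * (‖(x:ℂ) - a‖ * ‖(x:ℂ) - I‖)^2) := Real.sqrt_le_sqrt this
      _ = Real.sqrt C * (‖(x:ℂ) - a‖ * ‖(x:ℂ) - I‖) := by
          rw [Real.sqrt_mul hC.le, Real.sqrt_sq hD.le]
    
  rw [norm_div, norm_mul]
  rw [div_le_iff₀ hD]
  calc ‖a - I‖ * Real.sqrt C * (1 + x ^ 2)⁻¹ * (‖(x:ℂ) - a‖ * ‖(x:ℂ) - I‖)
      = ‖a - I‖ * ((1 + x ^ 2)⁻¹ * (Real.sqrt C * (‖(x:ℂ) - a‖ * ‖(x:ℂ) - I‖))) := by ring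
    _ ≥ ‖a - I‖ * ((1 + x ^ 2)⁻¹ * (1 + x^2)) := by
        apply mul_le_mul_of_nonneg_left _ (norm_nonneg _)
        apply mul_le_mul_of_nonneg_left hcross (by positivity)
    _ = ‖a - I‖ := by
        rw [inv_mul_cancel₀ (by positivity)]; ring


lemma tendsto_inv_shift (c : ℂ) {l : Filter ℝ} (hl : Tendsto (fun x : ℝ => |x|) l atTop) :
    Tendsto (fun x : ℝ => ((x:ℂ) - c)⁻¹) l (𝓝 0) := by
  have h1 : Tendsto (fun x : ℝ => ‖(x:ℂ) - c‖) l atTop := by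
    apply tendsto_atTop_mono' l _ (tendsto_atTop_add_const_right l (-‖c‖) hl)
    filter_upwards with x
    calc |x| + -‖c‖ = ‖(x:ℂ)‖ - ‖c‖ := by rw [Complex.norm_real, Real.norm_eq_abs]; ring
      _ ≤ ‖(x:ℂ) - c‖ := norm_sub_norm_le _ _
  rw [tendsto_zero_iff_norm_tendsto_zero]
  simp only [norm_inv]
  exact h1.inv_tendsto_atTop

lemma slit (a : ℂ) (ha : 0 < a.im) (x : ℝ) :
    ((x:ℂ) - a) / ((x:ℂ) - I) ∈ Complex.slitPlane := by
  rw [Complex.mem_slitPlane_iff]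
  set z := ((x:ℂ) - a) / ((x:ℂ) - I) with hz
  rcases eq_or_ne z.im 0 with h | h
  · left
    have hx : (x:ℂ) - a = z * ((x:ℂ) - I) := by
      rw [hz, div_mul_cancel₀ _ (sub_I_ne x)]
    have := congrArg Complex.im hx
    simp [Complex.mul_im, Complex.sub_im, Complex.sub_re, h] at this
    exact this ▸ ha
  · exact Or.inr h

lemma hasDerivAt_h (a : ℂ) (x : ℝ) :
    HasDerivAt (fun t : ℝ => ((t:ℂ) - a) / ((t:ℂ) - I)) ((a - I) / ((x:ℂ) - I)^2) x := by
  have hb : HasDerivAt (fun t : ℝ => (t:ℂ)) 1 x := Complex.ofRealCLM.hasDerivAt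
  have hu : HasDerivAt (fun t : ℝ => (t:ℂ) - a) 1 x := hb.sub_const a
  have hv : HasDerivAt (fun t : ℝ => (t:ℂ) - I) 1 x := hb.sub_const I
  have := hu.div hv (sub_I_ne x)
  convert this using 1
  · rfl
  · rfl
  · ring

lemma hasDerivAt_F (a : ℂ) (ha : 0 < a.im) (x : ℝ) :
    HasDerivAt (fun t : ℝ => Complex.log (((t:ℂ) - a) / ((t:ℂ) - I))) (psi a x) x := by
  have h1 := (hasDerivAt_h a x).clog_real (slit a ha x)
  convert h1 using 1
  rw [psi_eq a ha x]
  have h2 := sub_ne a (ne_of_gt ha) x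
  have h3 := sub_I_ne x
  field_simp

lemma tendsto_F (a : ℂ) {l : Filter ℝ} (hl : Tendsto (fun x : ℝ => |x|) l atTop) :
    Tendsto (fun t : ℝ => Complex.log (((t:ℂ) - a) / ((t:ℂ) - I))) l (𝓝 0) := by
  have hh : Tendsto (fun t : ℝ => ((t:ℂ) - a) / ((t:ℂ) - I)) l (𝓝 1) := by
    have h0 : Tendsto (fun t : ℝ => 1 + (I - a) * ((t:ℂ) - I)⁻¹) l (𝓝 (1 + (I - a) * 0)) :=
      tendsto_const_nhds.add (tendsto_const_nhds.mul (tendsto_inv_shift I hl))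
    rw [mul_zero, add_zero] at h0
    apply h0.congr
    intro x
    field_simp [sub_I_ne x]
    ring
  simpa [Complex.log_one] using hh.clog Complex.one_mem_slitPlane

lemma psi_integral_zero (a : ℂ) (ha : 0 < a.im) : ∫ x : ℝ, psi a x = 0 := by
  have hi := psi_integrable a ha
  set F : ℝ → ℂ := fun t => Complex.log (((t:ℂ) - a) / ((t:ℂ) - I)) with hF
  have h1 : ∫ x in Set.Ioi (0:ℝ), psi a x = 0 - F 0 :=
    integral_Ioi_of_hasDerivAt_of_tendsto' (fun x _ => hasDerivAt_F a ha x)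
      hi.integrableOn (tendsto_F a (tendsto_abs_atTop_atTop))
  have h2 : ∫ x in Set.Iic (0:ℝ), psi a x = F 0 - 0 :=
    integral_Iic_of_hasDerivAt_of_tendsto' (fun x _ => hasDerivAt_F a ha x)
      hi.integrableOn (tendsto_F a (tendsto_abs_atBot_atTop))
  rw [← intervalIntegral.integral_Iic_add_Ioi hi.integrableOn hi.integrableOn, h1, h2]
  ring

end RatKernelAux

open RatKernelAux

/-- The complex-valued rational kernel
`K(x) = (2πi)⁻¹ ∑ⱼ (αⱼ/(x - aⱼ) - conj αⱼ/(x - conj aⱼ))`. -/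
noncomputable def ratKernelC (m : ℕ) (a α : Fin m → ℂ) (x : ℝ) : ℂ :=
  (2 * (Real.pi : ℂ) * Complex.I)⁻¹ *
    ∑ j, (α j / ((x : ℂ) - a j) -
      (starRingEnd ℂ) (α j) / ((x : ℂ) - (starRingEnd ℂ) (a j)))

theorem ratKernel_real_and_unit_mass
    (m : ℕ) (hm : 0 < m) (a α : Fin m → ℂ)
    (ha : ∀ j, 0 < (a j).im) (hinj : Function.Injective a)
    (hvand : ∀ k : ℕ, k < m → ∑ j, α j * a j ^ k = if k = 0 then 1 else 0) :
    (∀ x : ℝ, (ratKernelC m a α x).im = 0) ∧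
      ∫ x : ℝ, (ratKernelC m a α x).re = 1 := by
  have hπ : (Real.pi : ℂ) ≠ 0 := by exact_mod_cast Real.pi_ne_zero
  set S : ℝ → ℂ := fun x => ∑ j, α j / ((x:ℂ) - a j) with hS
  have hK : ∀ x : ℝ, ratKernelC m a α x = (((S x).im / Real.pi : ℝ) : ℂ) := by
    intro x
    have hsum : ∑ j, ((α j) / ((x:ℂ) - a j) -
        (starRingEnd ℂ) (α j) / ((x:ℂ) - (starRingEnd ℂ) (a j)))
        = S x - (starRingEnd ℂ) (S x) := by
      rw [hS]
      simp only [map_sum, map_div₀, map_sub, Complex.conj_ofReal]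
      rw [Finset.sum_sub_distrib]
    rw [ratKernelC, hsum, Complex.sub_conj]
    rw [Complex.ext_iff]
    constructor
    · simp [Complex.div_re, Complex.normSq_apply, Complex.mul_re, Complex.mul_im,
        Complex.inv_re, Complex.inv_im]
      field_simp
    · simp [Complex.div_im, Complex.normSq_apply, Complex.mul_re, Complex.mul_im,
        Complex.inv_re, Complex.inv_im]
  refine ⟨fun x => by rw [hK x]; exact Complex.ofReal_im _, ?_⟩
  have hψint : ∀ j : Fin m, Integrable (fun x : ℝ => α j * psi (a j) x) :=
    fun j => (psi_integrable (a j) (ha j)).const_mul (α j)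
  have hsum1 : ∑ j, α j = 1 := by simpa using hvand 0 hm
  have hSim : ∀ x : ℝ, (S x).im = (∑ j, (α j * psi (a j) x).im) + (1 + x^2)⁻¹ := by
    intro x
    have h1 : S x = (∑ j, α j * psi (a j) x) + ((x:ℂ) - I)⁻¹ := by
      simp only [hS]
      have hterm : ∀ j : Fin m, α j / ((x:ℂ) - a j)
          = α j * psi (a j) x + α j * ((x:ℂ) - I)⁻¹ := by
        intro j
        rw [psi, div_eq_mul_inv]
        ring
      rw [Finset.sum_congr rfl (fun j _ => hterm j), Finset.sum_add_distrib,
        ← Finset.sum_mul, hsum1, one_mul]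
    rw [h1, Complex.add_im, Complex.im_sum]
    congr 1
    rw [Complex.inv_im]
    simp [Complex.normSq_apply]
    ring
  have him : ∀ j : Fin m, Integrable (fun x : ℝ => (α j * psi (a j) x).im) := by
    intro j
    have := (hψint j).im
    simpa [RCLike.im_to_complex] using this
  have hintsum : Integrable (fun x : ℝ => ∑ j, (α j * psi (a j) x).im) :=
    integrable_finset_sum _ (fun j _ => him j)
  have hI2 : ∀ j : Fin m, (∫ x : ℝ, (α j * psi (a j) x).im) = 0 := by
    intro j
    have h := integral_im (hψint j)
    simp only [RCLike.im_to_complex] at h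
    rw [h, integral_const_mul, psi_integral_zero (a j) (ha j), mul_zero]
    simp
  have hSimInt : (∫ x : ℝ, (S x).im) = Real.pi := by
    rw [integral_congr_ae (Filter.Eventually.of_forall hSim),
      integral_add hintsum integrable_inv_one_add_sq,
      integral_finset_sum _ (fun j _ => him j), integral_univ_inv_one_add_sq]
    simp only [hI2]
    simp
  calc ∫ x : ℝ, (ratKernelC m a α x).re = ∫ x : ℝ, (S x).im / Real.pi := by
        apply integral_congr_ae
        filter_upwards with x
        rw [hK x, Complex.ofReal_re]
    _ = (∫ x : ℝ, (S x).im) / Real.pi := integral_div _ _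
    _ = 1 := by rw [hSimInt, div_self Real.pi_ne_zero]
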